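/- Under the block-diagonal structure, the truncation bias for the nested-model square-loss gap satisfies ‖Σ (R_γ T_γ(Σ) R_γ − R Σ R) Σ‖_op ≤ γ, where Σ = diag(Σ₁, Σ₋₁), R = blkdiag(Σ₁^{-1},0) − Σ^{-1} = blkdiag(0, Σ₋₁^{-1}), and R_γ = blkdiag(T_γ(Σ₁)^{-1},0) − T_γ(Σ)^{-1} = blkdiag(0, T_γ(Σ₋₁)^{-1}). -/

import Mathlib

open Matrix

/-- Operator (spectral) norm of a real square matrix. -/
noncomputable def opNorm {n : Type*} [Fintype n] [DecidableEq n]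
    (A : Matrix n n ℝ) : ℝ :=
  ‖(Matrix.toEuclideanCLM (𝕜 := ℝ) (n := n) A :
      EuclideanSpace ℝ n →L[ℝ] EuclideanSpace ℝ n)‖

/-- Eigenvalue thresholding: replace each eigenvalue `lam k` by `max (lam k) γ`. -/
noncomputable def threshold {n : Type*} [Fintype n] [DecidableEq n]
    (U : Matrix n n ℝ) (lam : n → ℝ) (γ : ℝ) : Matrix n n ℝ :=
  U * Matrix.diagonal (fun k => max (lam k) γ) * Uᵀ

open scoped Matrix.Norms.L2Operator

section Aux
variable {n : Type*} [Fintype n] [DecidableEq n]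

lemma aux_conj_mul (U : Matrix n n ℝ) (hU : Uᵀ * U = 1) (a b : n → ℝ) :
    (U * Matrix.diagonal a * Uᵀ) * (U * Matrix.diagonal b * Uᵀ)
      = U * Matrix.diagonal (fun k => a k * b k) * Uᵀ := by
  have h : (U * Matrix.diagonal a * Uᵀ) * (U * Matrix.diagonal b * Uᵀ)
      = U * (Matrix.diagonal a * (Uᵀ * U) * Matrix.diagonal b) * Uᵀ := by
    noncomm_ring
  rw [h, hU, mul_one, diagonal_mul_diagonal]

lemma aux_conj_inv (U : Matrix n n ℝ) (hU : Uᵀ * U = 1) (hU' : U * Uᵀ = 1)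
    (a : n → ℝ) (ha : ∀ k, a k ≠ 0) :
    (U * Matrix.diagonal a * Uᵀ)⁻¹ = U * Matrix.diagonal (fun k => (a k)⁻¹) * Uᵀ := by
  apply Matrix.inv_eq_right_inv
  rw [aux_conj_mul U hU]
  have : (fun k => a k * (a k)⁻¹) = fun _ => (1 : ℝ) := funext fun k => mul_inv_cancel₀ (ha k)
  rw [this, diagonal_one, mul_one, hU']

lemma aux_conj_unit (U : Matrix n n ℝ) (hU : Uᵀ * U = 1) (hU' : U * Uᵀ = 1)
    (a : n → ℝ) (ha : ∀ k, a k ≠ 0) : IsUnit (U * Matrix.diagonal a * Uᵀ) := by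
  rw [Matrix.isUnit_iff_isUnit_det]
  apply Matrix.isUnit_det_of_right_inverse (B := U * Matrix.diagonal (fun k => (a k)⁻¹) * Uᵀ)
  rw [aux_conj_mul U hU]
  have : (fun k => a k * (a k)⁻¹) = fun _ => (1 : ℝ) := funext fun k => mul_inv_cancel₀ (ha k)
  rw [this, diagonal_one, mul_one, hU']

omit [Fintype n] [DecidableEq n] in
lemma aux_fromBlocks_sub {m : Type*}
    (A A' : Matrix m m ℝ) (B B' : Matrix m n ℝ) (C C' : Matrix n m ℝ) (D D' : Matrix n n ℝ) :
    fromBlocks A B C D - fromBlocks A' B' C' D'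
      = fromBlocks (A - A') (B - B') (C - C') (D - D') := by
  ext i j
  cases i <;> cases j <;> simp [Matrix.fromBlocks, Matrix.sub_apply]

lemma aux_blk_inv {m : Type*} [Fintype m] [DecidableEq m]
    (A : Matrix m m ℝ) (B : Matrix n n ℝ) (hA : IsUnit A) (hB : IsUnit B) :
    (fromBlocks A 0 0 B)⁻¹ = fromBlocks A⁻¹ 0 0 B⁻¹ := by
  apply Matrix.inv_eq_right_inv
  rw [fromBlocks_multiply]
  simp [Matrix.mul_nonsing_inv _ ((Matrix.isUnit_iff_isUnit_det _).mp hA),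
    Matrix.mul_nonsing_inv _ ((Matrix.isUnit_iff_isUnit_det _).mp hB), fromBlocks_one]

lemma aux_norm_one_le : ‖(1 : Matrix n n ℝ)‖ ≤ 1 := by
  rw [Matrix.cstar_norm_def, _root_.map_one, ContinuousLinearMap.one_def]
  exact ContinuousLinearMap.norm_id_le

lemma aux_norm_orth_le (U : Matrix n n ℝ) (hU : Uᵀ * U = 1) : ‖U‖ ≤ 1 := by
  have h1 : ‖U‖ * ‖U‖ = ‖Uᴴ * U‖ := (Matrix.l2_opNorm_conjTranspose_mul_self U).symm
  rw [conjTranspose_eq_transpose_of_trivial, hU] at h1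
  nlinarith [norm_nonneg U, aux_norm_one_le (n := n)]

lemma aux_norm_diag_le (v : n → ℝ) (c : ℝ) (hc : 0 ≤ c) (h : ∀ k, |v k| ≤ c) :
    ‖Matrix.diagonal v‖ ≤ c := by
  rw [Matrix.l2_opNorm_def]
  refine ContinuousLinearMap.opNorm_le_bound _ hc fun x => ?_
  simp only [LinearEquiv.trans_apply, LinearMap.coe_toContinuousLinearMap']
  rw [Matrix.toEuclideanLin_apply, EuclideanSpace.norm_eq, EuclideanSpace.norm_eq]
  have key : ∀ i, ‖(WithLp.equiv 2 (n → ℝ)).symm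
      (Matrix.diagonal v *ᵥ (WithLp.equiv 2 (n → ℝ)) x) i‖ ^ 2
      ≤ c ^ 2 * ‖x i‖ ^ 2 := by
    intro i
    have hvx : (WithLp.equiv 2 (n → ℝ)).symm
        (Matrix.diagonal v *ᵥ (WithLp.equiv 2 (n → ℝ)) x) i
        = v i * x i := by
      simp [Matrix.mulVec_diagonal]
    rw [hvx]
    have h1 := h i
    simp only [Real.norm_eq_abs]
    rw [abs_mul, mul_pow]
    have h3 : |v i| ^ 2 ≤ c ^ 2 := by nlinarith [abs_nonneg (v i)]
    exact mul_le_mul_of_nonneg_right h3 (sq_nonneg _)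
  calc √(∑ i, ‖(WithLp.equiv 2 (n → ℝ)).symm
      (Matrix.diagonal v *ᵥ (WithLp.equiv 2 (n → ℝ)) x) i‖ ^ 2)
      ≤ √(∑ i, c ^ 2 * ‖x i‖ ^ 2) :=
        Real.sqrt_le_sqrt (Finset.sum_le_sum fun i _ => key i)
    _ = c * √(∑ i, ‖x i‖ ^ 2) := by
        rw [← Finset.mul_sum, Real.sqrt_mul (sq_nonneg c), Real.sqrt_sq hc]

lemma aux_scalar {l γ : ℝ} (hγ : 0 < γ) (hl : 0 < l) :
    |l * (max l γ)⁻¹ * l - l| ≤ γ := by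
  rcases le_total γ l with h | h
  · rw [max_eq_left h]
    have h0 : l * l⁻¹ * l - l = 0 := by field_simp; ring
    rw [h0, abs_zero]
    exact hγ.le
  · rw [max_eq_right h]
    have key : l * γ⁻¹ * l - l = (l * l - γ * l) / γ := by field_simp
    rw [key, abs_le]
    constructor
    · rw [le_div_iff₀ hγ]; nlinarith
    · rw [div_le_iff₀ hγ]; nlinarith

end Aux

/-- Under block-diagonal structure `Σ = blkdiag(Σ₁, Σ₋₁)`, the truncation bias for the
nested-model square-loss gap satisfies `‖Σ (R_γ T_γ(Σ) R_γ − R Σ R) Σ‖_op ≤ γ`, where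
`R = blkdiag(Σ₁⁻¹,0) − Σ⁻¹` and `R_γ = blkdiag(T_γ(Σ₁)⁻¹,0) − T_γ(Σ)⁻¹`, and
`T_γ(Σ) = blkdiag(T_γ(Σ₁), T_γ(Σ₋₁))`. -/
theorem block_diagonal_truncation_bias {d₁ d₂ : ℕ}
    (S1 U1 : Matrix (Fin d₁) (Fin d₁) ℝ) (Sm1 U2 : Matrix (Fin d₂) (Fin d₂) ℝ)
    (lam1 : Fin d₁ → ℝ) (lam2 : Fin d₂ → ℝ) (γ : ℝ) (hγ : 0 < γ)
    (hS1 : S1.PosDef) (hSm1 : Sm1.PosDef)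
    (hU1 : U1 ∈ Matrix.orthogonalGroup (Fin d₁) ℝ)
    (hU2 : U2 ∈ Matrix.orthogonalGroup (Fin d₂) ℝ)
    (hdecomp1 : S1 = U1 * Matrix.diagonal lam1 * U1ᵀ)
    (hdecomp2 : Sm1 = U2 * Matrix.diagonal lam2 * U2ᵀ) :
    opNorm (Matrix.fromBlocks S1 0 0 Sm1 *
        ((Matrix.fromBlocks (threshold U1 lam1 γ)⁻¹ 0 0 0 -
            (Matrix.fromBlocks (threshold U1 lam1 γ) 0 0 (threshold U2 lam2 γ))⁻¹) *
          Matrix.fromBlocks (threshold U1 lam1 γ) 0 0 (threshold U2 lam2 γ) *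
          (Matrix.fromBlocks (threshold U1 lam1 γ)⁻¹ 0 0 0 -
            (Matrix.fromBlocks (threshold U1 lam1 γ) 0 0 (threshold U2 lam2 γ))⁻¹) -
          (Matrix.fromBlocks S1⁻¹ 0 0 0 - (Matrix.fromBlocks S1 0 0 Sm1)⁻¹) *
            Matrix.fromBlocks S1 0 0 Sm1 *
            (Matrix.fromBlocks S1⁻¹ 0 0 0 - (Matrix.fromBlocks S1 0 0 Sm1)⁻¹)) *
        Matrix.fromBlocks S1 0 0 Sm1) ≤ γ := by
  classical
  -- orthogonality facts
  have hU1a : U1 * U1ᵀ = 1 := by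
    have := (Matrix.mem_orthogonalGroup_iff _ _).mp hU1
    exact this
  have hU1b : U1ᵀ * U1 = 1 := by
    have := (Matrix.mem_orthogonalGroup_iff' _ _).mp hU1
    exact this
  have hU2a : U2 * U2ᵀ = 1 := by
    have := (Matrix.mem_orthogonalGroup_iff _ _).mp hU2
    exact this
  have hU2b : U2ᵀ * U2 = 1 := by
    have := (Matrix.mem_orthogonalGroup_iff' _ _).mp hU2
    exact this
  -- eigenvalue facts
  have hm1 : ∀ k, max (lam1 k) γ ≠ 0 := fun k => (lt_of_lt_of_le hγ (le_max_right _ _)).ne'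
  have hm2 : ∀ k, max (lam2 k) γ ≠ 0 := fun k => (lt_of_lt_of_le hγ (le_max_right _ _)).ne'
  have hlam2nn : ∀ k, 0 ≤ lam2 k := by
    have h1 : U2ᵀ * Sm1 * U2 = Matrix.diagonal lam2 := by
      rw [hdecomp2]
      have : U2ᵀ * (U2 * Matrix.diagonal lam2 * U2ᵀ) * U2
          = (U2ᵀ * U2) * Matrix.diagonal lam2 * (U2ᵀ * U2) := by noncomm_ring
      rw [this, hU2b, one_mul, mul_one]
    have hps := hSm1.posSemidef.conjTranspose_mul_mul_same U2
    rw [conjTranspose_eq_transpose_of_trivial, h1] at hps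
    exact fun k => Matrix.posSemidef_diagonal_iff.mp hps k
  have hlam2ne : ∀ k, lam2 k ≠ 0 := by
    have hdet : Sm1.det ≠ 0 := hSm1.det_pos.ne'
    rw [hdecomp2, Matrix.det_mul, Matrix.det_mul, Matrix.det_diagonal] at hdet
    intro k hk
    exact hdet (by rw [Finset.prod_eq_zero (Finset.mem_univ k) hk]; ring)
  have hlam2 : ∀ k, 0 < lam2 k := fun k => lt_of_le_of_ne (hlam2nn k) (Ne.symm (hlam2ne k))
  -- threshold expressions
  have hT1 : threshold U1 lam1 γ = U1 * Matrix.diagonal (fun k => max (lam1 k) γ) * U1ᵀ := rfl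
  have hT2 : threshold U2 lam2 γ = U2 * Matrix.diagonal (fun k => max (lam2 k) γ) * U2ᵀ := rfl
  have hT1inv : (threshold U1 lam1 γ)⁻¹
      = U1 * Matrix.diagonal (fun k => (max (lam1 k) γ)⁻¹) * U1ᵀ := by
    rw [hT1]; exact aux_conj_inv U1 hU1b hU1a _ hm1
  have hT2inv : (threshold U2 lam2 γ)⁻¹
      = U2 * Matrix.diagonal (fun k => (max (lam2 k) γ)⁻¹) * U2ᵀ := by
    rw [hT2]; exact aux_conj_inv U2 hU2b hU2a _ hm2
  have hSm1inv : Sm1⁻¹ = U2 * Matrix.diagonal (fun k => (lam2 k)⁻¹) * U2ᵀ := by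
    rw [hdecomp2]; exact aux_conj_inv U2 hU2b hU2a _ hlam2ne
  -- units
  have hTu1 : IsUnit (threshold U1 lam1 γ) := by
    rw [hT1]; exact aux_conj_unit U1 hU1b hU1a _ hm1
  have hTu2 : IsUnit (threshold U2 lam2 γ) := by
    rw [hT2]; exact aux_conj_unit U2 hU2b hU2a _ hm2
  -- block inverses
  have hEinv : (Matrix.fromBlocks (threshold U1 lam1 γ) 0 0 (threshold U2 lam2 γ))⁻¹
      = Matrix.fromBlocks (threshold U1 lam1 γ)⁻¹ 0 0 (threshold U2 lam2 γ)⁻¹ :=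
    aux_blk_inv _ _ hTu1 hTu2
  have hSinv : (Matrix.fromBlocks S1 0 0 Sm1)⁻¹ = Matrix.fromBlocks S1⁻¹ 0 0 Sm1⁻¹ :=
    aux_blk_inv _ _ hS1.isUnit hSm1.isUnit
  have hRg : Matrix.fromBlocks (threshold U1 lam1 γ)⁻¹ 0 0 0 -
      (Matrix.fromBlocks (threshold U1 lam1 γ) 0 0 (threshold U2 lam2 γ))⁻¹
      = Matrix.fromBlocks 0 0 0 (-(threshold U2 lam2 γ)⁻¹) := by
    rw [hEinv, aux_fromBlocks_sub]
    simp
  have hR : Matrix.fromBlocks S1⁻¹ 0 0 0 - (Matrix.fromBlocks S1 0 0 Sm1)⁻¹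
      = Matrix.fromBlocks 0 0 0 (-Sm1⁻¹) := by
    rw [hSinv, aux_fromBlocks_sub]
    simp
  rw [hRg, hR]
  -- collapse to a single block
  have hblk : Matrix.fromBlocks S1 0 0 Sm1 *
      (Matrix.fromBlocks 0 0 0 (-(threshold U2 lam2 γ)⁻¹) *
        Matrix.fromBlocks (threshold U1 lam1 γ) 0 0 (threshold U2 lam2 γ) *
        Matrix.fromBlocks 0 0 0 (-(threshold U2 lam2 γ)⁻¹) -
        Matrix.fromBlocks 0 0 0 (-Sm1⁻¹) * Matrix.fromBlocks S1 0 0 Sm1 *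
        Matrix.fromBlocks 0 0 0 (-Sm1⁻¹)) *
      Matrix.fromBlocks S1 0 0 Sm1
      = Matrix.fromBlocks 0 0 0
        (Sm1 * ((-(threshold U2 lam2 γ)⁻¹) * threshold U2 lam2 γ * (-(threshold U2 lam2 γ)⁻¹) -
          (-Sm1⁻¹) * Sm1 * (-Sm1⁻¹)) * Sm1) := by
    simp only [Matrix.fromBlocks_multiply, aux_fromBlocks_sub, Matrix.zero_mul, Matrix.mul_zero,
      add_zero, zero_add, sub_self, sub_zero, zero_sub, neg_zero]
  rw [hblk]
  -- simplify the bottom block to a conjugated diagonal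
  have hbot : Sm1 * ((-(threshold U2 lam2 γ)⁻¹) * threshold U2 lam2 γ * (-(threshold U2 lam2 γ)⁻¹) -
      (-Sm1⁻¹) * Sm1 * (-Sm1⁻¹)) * Sm1
      = U2 * Matrix.diagonal
          (fun k => lam2 k * (max (lam2 k) γ)⁻¹ * lam2 k - lam2 k) * U2ᵀ := by
    rw [hT2inv, hT2, hSm1inv]
    rw [hdecomp2]
    simp only [neg_mul, mul_neg, neg_neg, Matrix.mul_sub, Matrix.sub_mul]
    simp only [aux_conj_mul U2 hU2b]
    rw [← Matrix.sub_mul, ← Matrix.mul_sub, Matrix.diagonal_sub]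
    congr 2
    funext k
    have h2 := hm2 k
    have hl := hlam2ne k
    field_simp
  rw [hbot]
  -- express as an orthogonal conjugation of a diagonal matrix over the sum type
  have hV : Matrix.fromBlocks 1 0 0 U2 *
          Matrix.diagonal (Sum.elim (0 : Fin d₁ → ℝ)
            (fun k => lam2 k * (max (lam2 k) γ)⁻¹ * lam2 k - lam2 k)) *
          (Matrix.fromBlocks 1 0 0 U2)ᵀ
      = Matrix.fromBlocks 0 0 0
        (U2 * Matrix.diagonal (fun k => lam2 k * (max (lam2 k) γ)⁻¹ * lam2 k - lam2 k) * U2ᵀ) := by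
    have hD : Matrix.diagonal (Sum.elim (0 : Fin d₁ → ℝ)
        (fun k => lam2 k * (max (lam2 k) γ)⁻¹ * lam2 k - lam2 k))
        = Matrix.fromBlocks (Matrix.diagonal (0 : Fin d₁ → ℝ)) 0 0
            (Matrix.diagonal (fun k => lam2 k * (max (lam2 k) γ)⁻¹ * lam2 k - lam2 k)) :=
      (Matrix.fromBlocks_diagonal _ _).symm
    rw [hD, Matrix.fromBlocks_transpose, Matrix.fromBlocks_multiply, Matrix.fromBlocks_multiply]
    simp [show Matrix.diagonal (0 : Fin d₁ → ℝ) = 0 from Matrix.diagonal_zero]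
  rw [← hV]
  -- norm estimates
  have hgoal : opNorm (Matrix.fromBlocks 1 0 0 U2 *
      Matrix.diagonal (Sum.elim (0 : Fin d₁ → ℝ)
        (fun k => lam2 k * (max (lam2 k) γ)⁻¹ * lam2 k - lam2 k)) *
      (Matrix.fromBlocks 1 0 0 U2)ᵀ)
      = ‖Matrix.fromBlocks 1 0 0 U2 *
      Matrix.diagonal (Sum.elim (0 : Fin d₁ → ℝ)
        (fun k => lam2 k * (max (lam2 k) γ)⁻¹ * lam2 k - lam2 k)) *
      (Matrix.fromBlocks 1 0 0 U2)ᵀ‖ := rfl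
  rw [hgoal]
  set V : Matrix (Fin d₁ ⊕ Fin d₂) (Fin d₁ ⊕ Fin d₂) ℝ := Matrix.fromBlocks 1 0 0 U2 with hVdef
  set D : Matrix (Fin d₁ ⊕ Fin d₂) (Fin d₁ ⊕ Fin d₂) ℝ :=
    Matrix.diagonal (Sum.elim (0 : Fin d₁ → ℝ)
      (fun k => lam2 k * (max (lam2 k) γ)⁻¹ * lam2 k - lam2 k)) with hDdef
  have hVb : Vᵀ * V = 1 := by
    rw [hVdef, Matrix.fromBlocks_transpose, Matrix.fromBlocks_multiply]
    simp [hU2b, Matrix.fromBlocks_one]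
  have hVa : V * Vᵀ = 1 := by
    rw [hVdef, Matrix.fromBlocks_transpose, Matrix.fromBlocks_multiply]
    simp [hU2a, Matrix.fromBlocks_one]
  have hVn : ‖V‖ ≤ 1 := aux_norm_orth_le V hVb
  have hVtn : ‖Vᵀ‖ ≤ 1 := by
    apply aux_norm_orth_le
    rw [Matrix.transpose_transpose]
    exact hVa
  have hDn : ‖D‖ ≤ γ := by
    apply aux_norm_diag_le _ _ hγ.le
    rintro (k | k)
    · simp [hγ.le]
    · simpa using aux_scalar hγ (hlam2 k)
  calc ‖V * D * Vᵀ‖ ≤ ‖V * D‖ * ‖Vᵀ‖ := Matrix.l2_opNorm_mul _ _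
    _ ≤ ‖V‖ * ‖D‖ * ‖Vᵀ‖ :=
        mul_le_mul_of_nonneg_right (Matrix.l2_opNorm_mul _ _) (norm_nonneg _)
    _ ≤ 1 * γ * 1 := by
        have h1 : ‖V‖ * ‖D‖ ≤ 1 * γ := mul_le_mul hVn hDn (norm_nonneg _) zero_le_one
        exact mul_le_mul h1 hVtn (norm_nonneg _) (by positivity)
    _ = γ := by ring
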